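/- arXiv:1610.07165 — 4 statements merged into one kernel-verified Lean document; each statement's English description precedes it below -/
import Mathlib

section
/- Let $n \geq 2$ and $0 < \varepsilon < 1$. Define $R_{i\bar j k\bar\ell} = -\delta_{ij}\delta_{k\ell} + (2-\varepsilon)\delta_{i\ell}\delta_{kj}$ for $i,j,k,\ell \in \{1,\dots,n\}$. Then: (1) for every unit vector $v \in \mathbb{C}^n$, the holomorphic sectional curvature $H(v) = \sum_{i,j,k,\ell} R_{i\bar j k\bar\ell} v_i \bar v_j v_k \bar v_\ell = 1-\varepsilon > 0$; (2) taking $a_1 = \cdots = a_n = 1/\sqrt{n}$ and the standard unitary frame, the real bisectional curvature $B = \sum_{i,j} R_{i\bar i j\bar j} a_i a_j = -n + 2 - \varepsilon < 0$. -/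
open Finset in
theorem example_2_2_curvature (n : ℕ) (hn : 2 ≤ n) (ε : ℝ) (hε0 : 0 < ε) (hε1 : ε < 1)
    (R : Fin n → Fin n → Fin n → Fin n → ℂ)
    (hR : ∀ i j k l : Fin n, R i j k l =
      -((if i = j then 1 else 0) * (if k = l then 1 else 0))
      + (2 - (ε : ℂ)) * (if i = l then 1 else 0) * (if k = j then 1 else 0)) :
    (∀ v : Fin n → ℂ, ∑ i, ‖v i‖ ^ 2 = 1 →
      ∑ i, ∑ j, ∑ k, ∑ l, R i j k l * v i * (starRingEnd ℂ) (v j) * v k * (starRingEnd ℂ) (v l)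
        = ((1 - ε : ℝ) : ℂ) ∧ (0 : ℝ) < 1 - ε) ∧
    (∀ a : Fin n → ℝ, (∀ i, a i = 1 / Real.sqrt n) →
      (∑ i, ∑ j, R i i j j * (a i : ℂ) * (a j : ℂ)) = ((-(n : ℝ) + 2 - ε : ℝ) : ℂ)
        ∧ (-(n : ℝ) + 2 - ε : ℝ) < 0) := by
  constructor
  · intro v hv
    have hc : ∑ i, v i * (starRingEnd ℂ) (v i) = 1 := by
      have : ∑ i, v i * (starRingEnd ℂ) (v i) = ((∑ i, ‖v i‖ ^ 2 : ℝ) : ℂ) := by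
        push_cast
        refine Finset.sum_congr rfl fun i _ => ?_
        rw [Complex.mul_conj']
      rw [this, hv]; norm_num
    refine ⟨?_, by linarith⟩
    have key : ∀ i j k l : Fin n,
        R i j k l * v i * (starRingEnd ℂ) (v j) * v k * (starRingEnd ℂ) (v l)
        = -((if i = j then v i * (starRingEnd ℂ) (v j) else 0) *
            (if k = l then v k * (starRingEnd ℂ) (v l) else 0))
          + (2 - (ε : ℂ)) * ((if i = l then v i * (starRingEnd ℂ) (v l) else 0) *
            (if k = j then v k * (starRingEnd ℂ) (v j) else 0)) := by
      intro i j k l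
      rw [hR]
      split_ifs <;> simp <;> ring
    simp only [key]
    simp only [Finset.sum_add_distrib, Finset.sum_neg_distrib, ← Finset.mul_sum,
      ← Finset.sum_mul, Finset.sum_ite_eq, Finset.sum_ite_eq', Finset.mem_univ, if_true]
    rw [hc]; push_cast; ring
  · intro a ha
    have hn0 : (0:ℝ) < Real.sqrt n := Real.sqrt_pos.mpr (by positivity)
    have hsq : Real.sqrt n * Real.sqrt n = n := Real.mul_self_sqrt (by positivity)
    have key : ∀ i j : Fin n, R i i j j * (a i : ℂ) * (a j : ℂ)
        = -((a i : ℂ) * (a j : ℂ))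
          + (2 - (ε : ℂ)) * (if i = j then (a i : ℂ) * (a j : ℂ) else 0) := by
      intro i j
      rcases eq_or_ne i j with h | h
      · subst h; simp [hR]; ring
      · simp [hR, h, Ne.symm h]
    simp only [key]
    simp only [Finset.sum_add_distrib, Finset.sum_neg_distrib, ← Finset.mul_sum,
      ← Finset.sum_mul, Finset.sum_ite_eq, Finset.sum_ite_eq', Finset.mem_univ, if_true]
    have hnne : (n:ℝ) ≠ 0 := by positivity
    have hAr : ∑ i : Fin n, a i = Real.sqrt n := by
      simp only [ha, Finset.sum_const, Finset.card_univ, Fintype.card_fin, nsmul_eq_mul]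
      rw [mul_one_div, div_eq_iff hn0.ne']
      exact hsq.symm
    have hBr : ∑ i : Fin n, a i * a i = 1 := by
      simp only [ha, Finset.sum_const, Finset.card_univ, Fintype.card_fin, nsmul_eq_mul]
      rw [div_mul_div_comm, hsq, mul_one, mul_one_div, div_self hnne]
    have hA : ∑ i : Fin n, (a i : ℂ) = ((Real.sqrt n : ℝ) : ℂ) := by
      rw [← hAr]; push_cast; ring
    have hB : ∑ i : Fin n, (a i : ℂ) * (a i : ℂ) = 1 := by
      have := congrArg (Complex.ofReal) hBr
      push_cast at this ⊢
      exact this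
    constructor
    · rw [hA, hB]
      have : ((Real.sqrt n : ℝ) : ℂ) * ((Real.sqrt n : ℝ) : ℂ) = ((n:ℝ):ℂ) := by
        exact_mod_cast congrArg Complex.ofReal hsq
      push_cast at this ⊢
      rw [mul_comm] at this
      rw [this]
      ring
    · have h2 : (2:ℝ) ≤ (n:ℝ) := by exact_mod_cast hn
      linarith
end

section
/- Let $b > 0$ and define the curvature array on $\{1,2\}^4$ by $R_{1\bar 1 1\bar 1} = R_{2\bar 2 2\bar 2} = 1$, $R_{1\bar 1 2\bar 2} = R_{1\bar 2 2\bar 1} = R_{2\bar 1 1\bar 2} = -1-b$, $R_{2\bar 2 1\bar 1} = 1+4b$, and all other components zero. Then for every nonzero positive semidefinite Hermitian $2\times 2$ matrix $\xi$ (with entries $\xi_{11}=x$, $\xi_{22}=y$, $\xi_{12}=t$, $\xi_{21}=\bar t$), one has $\sum_{i,j,k,\ell} R_{i\bar j k\bar\ell}\,\xi_{ij}\xi_{k\ell} = x^2 + y^2 + 3bxy - 2(1+b)|t|^2 > 0$. -/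
open Finset in
open scoped ComplexOrder in
theorem example_positive_rbc (b : ℝ) (hb : 0 < b)
    (R : Fin 2 → Fin 2 → Fin 2 → Fin 2 → ℂ)
    (hR : ∀ i j k l : Fin 2, R i j k l =
      if (i, j, k, l) = (0, 0, 0, 0) then 1
      else if (i, j, k, l) = (1, 1, 1, 1) then 1
      else if (i, j, k, l) = (0, 0, 1, 1) then -1 - b
      else if (i, j, k, l) = (0, 1, 1, 0) then -1 - b
      else if (i, j, k, l) = (1, 0, 0, 1) then -1 - b
      else if (i, j, k, l) = (1, 1, 0, 0) then 1 + 4 * b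
      else 0) :
    ∀ ξ : Matrix (Fin 2) (Fin 2) ℂ, ξ.PosSemidef → ξ ≠ 0 →
      (∑ i, ∑ j, ∑ k, ∑ l, R i j k l * ξ i j * ξ k l) =
        (((ξ 0 0).re ^ 2 + (ξ 1 1).re ^ 2 + 3 * b * (ξ 0 0).re * (ξ 1 1).re
          - 2 * (1 + b) * ‖ξ 0 1‖ ^ 2 : ℝ) : ℂ) ∧
      (0 : ℝ) < (ξ 0 0).re ^ 2 + (ξ 1 1).re ^ 2 + 3 * b * (ξ 0 0).re * (ξ 1 1).re
          - 2 * (1 + b) * ‖ξ 0 1‖ ^ 2 := by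
  intro ξ hps hne
  have hH := hps.1
  set x := (ξ 0 0).re with hxdef
  set y := (ξ 1 1).re with hydef
  set t := ξ 0 1 with htdef
  have h00 : ξ 0 0 = (x : ℂ) := (hH.coe_re_apply_self 0).symm
  have h11 : ξ 1 1 = (y : ℂ) := (hH.coe_re_apply_self 1).symm
  have h10 : ξ 1 0 = (starRingEnd ℂ) t := (hH.apply 1 0).symm
  have hmc : t * (starRingEnd ℂ) t = ((‖t‖ ^ 2 : ℝ) : ℂ) := by
    simp [Complex.mul_conj, Complex.normSq_eq_norm_sq]
  -- the quadratic form is nonnegative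
  have key : ∀ a c : ℂ, (0:ℝ) ≤ ((starRingEnd ℂ) a * (ξ 0 0 * a + ξ 0 1 * c)
      + (starRingEnd ℂ) c * (ξ 1 0 * a + ξ 1 1 * c)).re := by
    intro a c
    have h := hps.dotProduct_mulVec_nonneg ![a, c]
    rw [Complex.nonneg_iff] at h
    simpa [Matrix.mulVec, dotProduct, Fin.sum_univ_two] using h.1
  set T := ‖t‖ ^ 2 with hTdef
  have hT : 0 ≤ T := by positivity
  have hx : 0 ≤ x := by simpa [h00, h11, h10] using key 1 0
  have hy : 0 ≤ y := by simpa [h00, h11, h10] using key 0 1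
  have h1 : 0 ≤ x * (x * y - T) := by
    have := key t (-(x : ℂ))
    rw [h00, h11, h10] at this
    have e : ((starRingEnd ℂ) t * ((x:ℂ) * t + t * -(x:ℂ))
        + (starRingEnd ℂ) (-(x:ℂ)) * ((starRingEnd ℂ) t * t + (y:ℂ) * -(x:ℂ)))
        = ((x * (x * y - T) : ℝ) : ℂ) := by
      simp only [map_neg, Complex.conj_ofReal]
      have : (starRingEnd ℂ) t * t = ((T : ℝ) : ℂ) := by rw [mul_comm]; exact hmc
      rw [this]; push_cast; ring
    rw [e] at this
    simpa using this
  have h2 : 0 ≤ y * (x * y - T) := by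
    have := key (y : ℂ) (-((starRingEnd ℂ) t))
    rw [h00, h11, h10] at this
    have e : ((starRingEnd ℂ) (y:ℂ) * ((x:ℂ) * (y:ℂ) + t * -((starRingEnd ℂ) t))
        + (starRingEnd ℂ) (-((starRingEnd ℂ) t)) * ((starRingEnd ℂ) t * (y:ℂ) + (y:ℂ) * -((starRingEnd ℂ) t)))
        = ((y * (x * y - T) : ℝ) : ℂ) := by
      simp only [map_neg, Complex.conj_ofReal, RingHom.id_apply, Complex.conj_conj]
      rw [show t * -((starRingEnd ℂ) t) = -(((T:ℝ)):ℂ) by rw [← hmc]; ring]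
      rw [show -t * ((starRingEnd ℂ) t * (y:ℂ) + (y:ℂ) * -(starRingEnd ℂ) t) = 0 by ring]
      push_cast; ring
    rw [e] at this
    simpa using this
  have h3 : 0 ≤ x - 2 * T + y * T := by
    have := key 1 (-((starRingEnd ℂ) t))
    rw [h00, h11, h10] at this
    have e : ((starRingEnd ℂ) 1 * ((x:ℂ) * 1 + t * -((starRingEnd ℂ) t))
        + (starRingEnd ℂ) (-((starRingEnd ℂ) t)) * ((starRingEnd ℂ) t * 1 + (y:ℂ) * -((starRingEnd ℂ) t)))
        = ((x - 2 * T + y * T : ℝ) : ℂ) := by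
      simp only [map_neg, map_one, Complex.conj_conj]
      rw [show t * -((starRingEnd ℂ) t) = -(((T:ℝ)):ℂ) by rw [← hmc]; ring]
      rw [show -t * ((starRingEnd ℂ) t * 1 + (y:ℂ) * -(starRingEnd ℂ) t)
          = (y:ℂ) * ((T:ℝ):ℂ) - (((T:ℝ)):ℂ) by rw [← hmc]; ring]
      push_cast; ring
    rw [e] at this
    simpa using this
  -- positivity
  have hpos : 0 < x ^ 2 + y ^ 2 + 3 * b * x * y - 2 * (1 + b) * T := by
    rcases lt_or_eq_of_le hx with hx0 | hx0
    · rcases lt_or_eq_of_le hy with hy0 | hy0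
      · have hTle : T ≤ x * y := by nlinarith [mul_pos hx0 hy0]
        nlinarith [mul_pos hx0 hy0, sq_nonneg (x - y)]
      · have hy0' : y = 0 := hy0.symm
        have h1' := h1
        rw [hy0'] at h1'
        have hxT : x * T = 0 := le_antisymm (by nlinarith [h1']) (by positivity)
        have hT0 : T = 0 := by
          rcases mul_eq_zero.mp hxT with h | h
          · exact absurd h hx0.ne'
          · exact h
        rw [hy0', hT0]; nlinarith
    · rcases lt_or_eq_of_le hy with hy0 | hy0
      · have hx0' : x = 0 := hx0.symm
        have h2' := h2
        rw [hx0'] at h2'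
        have hyT : y * T = 0 := le_antisymm (by nlinarith [h2']) (by positivity)
        have hT0 : T = 0 := by
          rcases mul_eq_zero.mp hyT with h | h
          · exact absurd h hy0.ne'
          · exact h
        rw [hx0', hT0]; nlinarith
      · -- x = 0, y = 0 → ξ = 0, contradiction
        exfalso
        have hT0 : T = 0 := by nlinarith
        have ht0 : t = 0 := by
          have h' : ‖t‖ = 0 := by
            have := sq_eq_zero_iff.mp hT0
            exact this
          simpa using h'
        have hξ00 : ξ 0 0 = 0 := by rw [h00, ← hx0]; norm_num
        have hξ01 : ξ 0 1 = 0 := ht0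
        have hξ10 : ξ 1 0 = 0 := by rw [h10, ht0]; simp
        have hξ11 : ξ 1 1 = 0 := by rw [h11, ← hy0]; norm_num
        apply hne
        ext i j
        fin_cases i <;> fin_cases j <;>
          simp [hξ00, hξ01, hξ10, hξ11]
  refine ⟨?_, hpos⟩
  have expand : (∑ i, ∑ j, ∑ k, ∑ l, R i j k l * ξ i j * ξ k l) =
      ξ 0 0 * ξ 0 0 + ξ 1 1 * ξ 1 1 + (-1-(b:ℂ)) * (ξ 0 0 * ξ 1 1)
      + (-1-(b:ℂ)) * (ξ 0 1 * ξ 1 0) + (-1-(b:ℂ)) * (ξ 1 0 * ξ 0 1)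
      + (1+4*(b:ℂ)) * (ξ 1 1 * ξ 0 0) := by
    simp only [Fin.sum_univ_two, hR]
    norm_num [Prod.ext_iff]
    ring
  rw [expand, h00, h11, h10, ← htdef]
  rw [show (starRingEnd ℂ) t * t = ((T:ℝ):ℂ) by rw [mul_comm]; exact hmc]
  rw [show t * (starRingEnd ℂ) t = ((T:ℝ):ℂ) from hmc]
  push_cast
  ring
end

section
/- Let $n \geq 1$, $c \in \mathbb{R}$, and let $R : \{1,\dots,n\}^4 \to \mathbb{C}$ satisfy the Hermitian symmetry $R_{i\bar j k\bar\ell} = \overline{R_{j\bar i \ell\bar k}}$ and the constant-curvature identity $R_{i\bar j k\bar\ell} + R_{k\bar\ell i\bar j} = 2c\,\delta_{i\ell}\delta_{kj}$ for all indices. Suppose moreover that $\sum_k (R_{i\bar j k\bar k} - R_{k\bar j i \bar k}) = 0$ for all $i,j$ (vanishing of the Gauduchon form derivative term). If $c = 0$, then $\sum_k R_{i\bar j k\bar k} = -\overline{\sum_k R_{j\bar i k\bar k}}$ and consequently $\mathrm{Ric}^{(1)}_{i\bar j} := \sum_k R_{i\bar j k\bar k} = 0$, $\mathrm{Ric}^{(2)}_{i\bar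 j} := \sum_k R_{k\bar k i\bar j} = 0$, and $\mathrm{Ric}^{(3)}_{i\bar j} := \sum_k R_{i\bar k k\bar j} = 0$ for all $i,j$. -/
open Finset in
theorem vanishing_ricci_of_zero_rbc (n : ℕ) (hn : 1 ≤ n) (c : ℝ)
    (R : Fin n → Fin n → Fin n → Fin n → ℂ)
    (hherm : ∀ i j k l : Fin n, R i j k l = (starRingEnd ℂ) (R j i l k))
    (hconst : ∀ i j k l : Fin n, R i j k l + R k l i j =
      2 * (c : ℂ) * (if i = l then 1 else 0) * (if k = j then 1 else 0))
    (hgauduchon : ∀ i j : Fin n, ∑ k, (R i j k k - R k j i k) = 0)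
    (hc : c = 0) :
    (∀ i j : Fin n, ∑ k, R i j k k = -(starRingEnd ℂ) (∑ k, R j i k k)) ∧
    (∀ i j : Fin n, ∑ k, R i j k k = 0) ∧
    (∀ i j : Fin n, ∑ k, R k k i j = 0) ∧
    (∀ i j : Fin n, ∑ k, R i k k j = 0) := by
  subst hc
  have hskew : ∀ i j k l : Fin n, R i j k l = - R k l i j := by
    intro i j k l
    have h := hconst i j k l
    simp only [Complex.ofReal_zero, mul_zero, zero_mul] at h
    linear_combination h
  have hg : ∀ i j : Fin n, ∑ k, R i j k k = ∑ k, R k j i k := by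
    intro i j
    have h := hgauduchon i j
    rw [Finset.sum_sub_distrib, sub_eq_zero] at h
    exact h
  have hHerm : ∀ i j : Fin n, ∑ k, R i j k k = (starRingEnd ℂ) (∑ k, R j i k k) := by
    intro i j
    rw [map_sum]
    exact Finset.sum_congr rfl fun k _ => hherm i j k k
  have hAnti : ∀ i j : Fin n, ∑ k, R i j k k = -(starRingEnd ℂ) (∑ k, R j i k k) := by
    intro i j
    calc ∑ k, R i j k k = ∑ k, R k j i k := hg i j
      _ = ∑ k, (starRingEnd ℂ) (R j k k i) := Finset.sum_congr rfl fun k _ => hherm k j i k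
      _ = (starRingEnd ℂ) (∑ k, R j k k i) := (map_sum _ _ _).symm
      _ = (starRingEnd ℂ) (∑ k, -R k i j k) :=
          congrArg _ (Finset.sum_congr rfl fun k _ => hskew j k k i)
      _ = (starRingEnd ℂ) (-(∑ k, R k i j k)) := by rw [Finset.sum_neg_distrib]
      _ = -(starRingEnd ℂ) (∑ k, R k i j k) := map_neg _ _
      _ = -(starRingEnd ℂ) (∑ k, R j i k k) := by rw [← hg j i]
  have h1 : ∀ i j : Fin n, ∑ k, R i j k k = 0 := by
    intro i j
    have h := hHerm i j
    have h' := hAnti i j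
    have : (2 : ℂ) * ∑ k, R i j k k = 0 := by linear_combination h + h'
    simpa using this
  refine ⟨hAnti, h1, ?_, ?_⟩
  · intro i j
    have : ∑ k, R k k i j = ∑ k, -R i j k k :=
      Finset.sum_congr rfl fun k _ => hskew k k i j
    rw [this, Finset.sum_neg_distrib, h1, neg_zero]
  · intro i j
    have : ∑ k, R i k k j = ∑ k, -R k j i k :=
      Finset.sum_congr rfl fun k _ => hskew i k k j
    rw [this, Finset.sum_neg_distrib, ← hg, h1, neg_zero]
end

section
/- Let $n \geq 2$ and $0 < \varepsilon < 1$. The curvature array $R_{i\bar j k\bar\ell} = \delta_{ij}\delta_{k\ell} - (2-\varepsilon)\delta_{i\ell}\delta_{kj}$ (the negative of the array from Example 2.2) has: (1) negative holomorphic sectional curvature: $\sum R_{i\bar j k\bar\ell} v_i\bar v_j v_k\bar v_\ell = -(1-\varepsilon)|v|^4 < 0$ for all nonzero $v \in \mathbb{C}^n$; (2) real bisectional curvature not nonpositive: with $a_1=\cdots=a_n = 1/\sqrt n$ in the standard unitary frame, $\sum_{i,j} R_{i\bar i j\bar j} a_i a_j = n - 2 + \varepsilon > 0$. -/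
open Finset in
theorem example_2_2_negative_version (n : ℕ) (hn : 2 ≤ n) (ε : ℝ) (hε0 : 0 < ε) (hε1 : ε < 1)
    (R : Fin n → Fin n → Fin n → Fin n → ℂ)
    (hR : ∀ i j k l : Fin n, R i j k l =
      (if i = j then 1 else 0) * (if k = l then 1 else 0)
      - (2 - (ε : ℂ)) * (if i = l then 1 else 0) * (if k = j then 1 else 0)) :
    (∀ v : Fin n → ℂ, v ≠ 0 →
      ∑ i, ∑ j, ∑ k, ∑ l, R i j k l * v i * (starRingEnd ℂ) (v j) * v k * (starRingEnd ℂ) (v l)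
        = ((-(1 - ε) * (∑ i, ‖v i‖ ^ 2) ^ 2 : ℝ) : ℂ) ∧
      (-(1 - ε) * (∑ i, ‖v i‖ ^ 2) ^ 2 : ℝ) < 0) ∧
    (∀ a : Fin n → ℝ, (∀ i, a i = 1 / Real.sqrt n) →
      (∑ i, ∑ j, R i i j j * (a i : ℂ) * (a j : ℂ)) = (((n : ℝ) - 2 + ε : ℝ) : ℂ)
        ∧ (0 : ℝ) < (n : ℝ) - 2 + ε) := by
  constructor
  · intro v hv
    have hSpos : 0 < ∑ i, ‖v i‖ ^ 2 := by
      obtain ⟨i, hi⟩ : ∃ i, v i ≠ 0 := by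
        by_contra h; push_neg at h; exact hv (funext h)
      exact Finset.sum_pos' (fun j _ => by positivity)
        ⟨i, Finset.mem_univ i, by have := norm_pos_iff.mpr hi; positivity⟩
    have hSsq : 0 < (∑ i, ‖v i‖ ^ 2) ^ 2 := by positivity
    refine ⟨?_, by nlinarith [mul_pos (show (0:ℝ) < 1 - ε by linarith) hSsq]⟩
    have hterm : ∀ i, v i * (starRingEnd ℂ) (v i) = ((‖v i‖ ^ 2 : ℝ) : ℂ) := by
      intro i
      rw [Complex.mul_conj]
      norm_cast
      rw [Complex.normSq_eq_norm_sq]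
    have key : ∑ i, ∑ j, ∑ k, ∑ l, R i j k l * v i * (starRingEnd ℂ) (v j) * v k * (starRingEnd ℂ) (v l)
        = (1 - (2 - (ε:ℂ))) * (∑ i, v i * (starRingEnd ℂ) (v i)) ^ 2 := by
      simp only [hR, sub_mul, ite_mul, mul_ite, one_mul, zero_mul, mul_zero, mul_one,
        Finset.sum_sub_distrib, Finset.sum_ite_irrel, Finset.sum_const_zero,
        Finset.sum_ite_eq, Finset.sum_ite_eq', Finset.mem_univ, if_true]
      rw [sq, Finset.sum_mul_sum]
      simp only [Finset.mul_sum,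
        ← Finset.sum_sub_distrib]
      apply Finset.sum_congr rfl; intro i _
      apply Finset.sum_congr rfl; intro j _
      ring
    rw [key]
    simp only [hterm]
    push_cast
    ring
  · intro a ha
    have hn0 : (0:ℝ) < n := by positivity
    refine ⟨?_, by linarith [show (2:ℝ) ≤ (n:ℝ) from by exact_mod_cast hn]⟩
    have hc : ((1/Real.sqrt n : ℝ):ℂ) * ((1/Real.sqrt n : ℝ):ℂ) = ((1/(n:ℝ) : ℝ):ℂ) := by
      norm_cast
      rw [div_mul_div_comm, one_mul, Real.mul_self_sqrt hn0.le]
    have hs : ((Real.sqrt n : ℝ) : ℂ)^2 = ((n:ℝ):ℂ) := by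
      norm_cast; exact Real.sq_sqrt hn0.le
    simp only [hR, ha, if_true, eq_self_iff_true, one_mul, sub_mul, ite_mul, zero_mul, mul_ite,
      mul_zero, Finset.sum_sub_distrib, Finset.sum_ite_eq, Finset.sum_ite_eq', Finset.mem_univ,
      if_true, Finset.sum_const, Finset.card_univ, Fintype.card_fin, nsmul_eq_mul]
    rw [mul_assoc, hc]
    push_cast
    ring_nf
    rw [inv_pow, hs]
    have hnc' : (n:ℂ) ≠ 0 := Nat.cast_ne_zero.mpr (by omega)
    rw [Complex.ofReal_natCast]
    field_simp
    ring
end
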